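/- Let G be a finite simple graph having a vertex v of degree at least 4 such that all neighbors of v except exactly one are leaves (vertices of degree 1), and the remaining neighbor has degree at least 2. Then b_dR(G) = 1. -/
import Mathlib


/-- A double Roman dominating function (DRDF) on a graph `G`: a function
`f : V → ℕ` taking values in `{0,1,2,3}` such that every vertex assigned `0`
has a neighbor assigned `3` or two distinct neighbors assigned `2`, and every
vertex assigned `1` has a neighbor assigned at least `2`. -/
def IsDRDF {V : Type*} (G : SimpleGraph V) (f : V → ℕ) : Prop :=
  (∀ v, f v ≤ 3) ∧
  (∀ v, f v = 0 →
    (∃ w, G.Adj v w ∧ f w = 3) ∨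
    (∃ w₁ w₂, G.Adj v w₁ ∧ G.Adj v w₂ ∧ w₁ ≠ w₂ ∧ f w₁ = 2 ∧ f w₂ = 2)) ∧
  (∀ v, f v = 1 → ∃ w, G.Adj v w ∧ 2 ≤ f w)

/-- The double Roman domination number `γ_dR(G)`: the minimum weight of a DRDF on `G`. -/
noncomputable def gammaDR {V : Type*} [Fintype V] (G : SimpleGraph V) : ℕ :=
  sInf {k | ∃ f : V → ℕ, IsDRDF G f ∧ ∑ v, f v = k}

/-- The double Roman bondage number `b_dR(G)`: the minimum cardinality of a set
`B` of edges of `G` such that `γ_dR(G - B) > γ_dR(G)`. -/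
noncomputable def bDR {V : Type*} [Fintype V] (G : SimpleGraph V) : ℕ :=
  sInf {k | ∃ B : Finset (Sym2 V), ↑B ⊆ G.edgeSet ∧ B.card = k ∧
    gammaDR G < gammaDR (G.deleteEdges ↑B)}


lemma isDRDF_mono {V : Type*} {G G' : SimpleGraph V}
    (h : ∀ x y, G'.Adj x y → G.Adj x y) {f : V → ℕ} (hf : IsDRDF G' f) :
    IsDRDF G f := by
  obtain ⟨h3, h0, h1⟩ := hf
  refine ⟨h3, fun x hx => ?_, fun x hx => ?_⟩
  · rcases h0 x hx with ⟨w, hw, hw3⟩ | ⟨w₁, w₂, ha1, ha2, hne, hv1, hv2⟩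
    · exact Or.inl ⟨w, h _ _ hw, hw3⟩
    · exact Or.inr ⟨w₁, w₂, h _ _ ha1, h _ _ ha2, hne, hv1, hv2⟩
  · obtain ⟨w, hw, hw2⟩ := h1 x hx
    exact ⟨w, h _ _ hw, hw2⟩

lemma gammaDR_set_nonempty {V : Type*} [Fintype V] (G : SimpleGraph V) :
    {k | ∃ f : V → ℕ, IsDRDF G f ∧ ∑ v, f v = k}.Nonempty :=
  ⟨_, fun _ => 3, ⟨fun _ => le_refl 3, fun x h => by simp at h, fun x h => by simp at h⟩, rfl⟩

lemma gammaDR_exists {V : Type*} [Fintype V] (G : SimpleGraph V) :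
    ∃ f : V → ℕ, IsDRDF G f ∧ ∑ x, f x = gammaDR G :=
  Nat.sInf_mem (gammaDR_set_nonempty G)

lemma key_lt {V : Type*} [Fintype V] (G : SimpleGraph V) [DecidableRel G.Adj]
    (v u a b c : V)
    (hu : G.Adj v u)
    (ha : G.Adj v a) (hb : G.Adj v b) (hc : G.Adj v c)
    (hau : a ≠ u) (hbu : b ≠ u) (hcu : c ≠ u)
    (hab : a ≠ b) (hac : a ≠ c) (hbc : b ≠ c)
    (hleaf : ∀ w, G.Adj v w → w ≠ u → G.degree w = 1) :
    gammaDR G < gammaDR (G.deleteEdges {s(v,a)}) := by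
  classical
  -- every leaf neighbor of v has v as unique neighbor
  have honly : ∀ w, G.Adj v w → w ≠ u → ∀ x, G.Adj w x → x = v := by
    intro w hw hwne x hx
    by_contra hxv
    have h1 : 1 < (G.neighborFinset w).card :=
      Finset.one_lt_card_iff.2 ⟨x, v, by simpa [SimpleGraph.mem_neighborFinset] using hx,
        by simpa [SimpleGraph.mem_neighborFinset] using hw.symm, hxv⟩
    rw [G.card_neighborFinset_eq_degree, hleaf w hw hwne] at h1
    omega
  set G' := G.deleteEdges {s(v,a)} with hG'
  have hsub : ∀ x y, G'.Adj x y → G.Adj x y := by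
    intro x y h
    exact ((SimpleGraph.deleteEdges_adj).1 h).1
  have hav : a ≠ v := ha.ne'
  have hbv : b ≠ v := hb.ne'
  have hcv : c ≠ v := hc.ne'
  -- a is isolated in G'
  have haIso : ∀ x, ¬ G'.Adj a x := by
    intro x h
    have hx : x = v := honly a ha hau x (hsub _ _ h)
    subst hx
    have := ((SimpleGraph.deleteEdges_adj).1 h).2
    apply this
    simp [Sym2.eq_swap]
  -- b, c keep v as unique neighbor in G'
  have honly' : ∀ w, G.Adj v w → w ≠ u → ∀ x, G'.Adj w x → x = v := by
    intro w hw hwne x hx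
    exact honly w hw hwne x (hsub _ _ hx)
  obtain ⟨f', hf', hsum'⟩ := gammaDR_exists G'
  obtain ⟨hle3, h0, h1⟩ := hf'
  have hfa : 2 ≤ f' a := by
    rcases Nat.lt_or_ge (f' a) 2 with h | h
    · have hfa01 : f' a = 0 ∨ f' a = 1 := by omega
      rcases hfa01 with hfa | hfa
      · rcases h0 a hfa with ⟨w, hw, _⟩ | ⟨w₁, w₂, hw₁, _, _, _, _⟩
        · exact absurd hw (haIso w)
        · exact absurd hw₁ (haIso w₁)
      · obtain ⟨w, hw, _⟩ := h1 a hfa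
        exact absurd hw (haIso w)
    · exact h
  by_cases hv2 : 2 ≤ f' v
  · -- Case 1 : replace f' a by 1
    set f : V → ℕ := Function.update f' a 1 with hfdef
    have hfx : ∀ x, x ≠ a → f x = f' x := fun x hx => Function.update_of_ne hx _ _
    have hfaa : f a = 1 := Function.update_self _ _ _
    have hfd : IsDRDF G f := by
      refine ⟨fun x => ?_, fun x hx => ?_, fun x hx => ?_⟩
      · rcases eq_or_ne x a with rfl | h
        · simp [hfaa]
        · rw [hfx x h]; exact hle3 x
      · rcases eq_or_ne x a with rfl | h
        · simp [hfaa] at hx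
        · rw [hfx x h] at hx
          rcases h0 x hx with ⟨w, hw, hw3⟩ | ⟨w₁, w₂, hw₁, hw₂, hne, hv1, hv2'⟩
          · have hwa : w ≠ a := fun hh => haIso x (hh ▸ hw).symm
            exact Or.inl ⟨w, hsub _ _ hw, by rw [hfx w hwa]; exact hw3⟩
          · have hw₁a : w₁ ≠ a := fun hh => haIso x (hh ▸ hw₁).symm
            have hw₂a : w₂ ≠ a := fun hh => haIso x (hh ▸ hw₂).symm
            exact Or.inr ⟨w₁, w₂, hsub _ _ hw₁, hsub _ _ hw₂, hne,
              by rw [hfx _ hw₁a]; exact hv1, by rw [hfx _ hw₂a]; exact hv2'⟩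
      · rcases eq_or_ne x a with rfl | h
        · exact ⟨v, ha.symm, by rw [hfx v hav.symm]; exact hv2⟩
        · rw [hfx x h] at hx
          obtain ⟨w, hw, hw2⟩ := h1 x hx
          have hwa : w ≠ a := fun hh => haIso x (hh ▸ hw).symm
          exact ⟨w, hsub _ _ hw, by rw [hfx w hwa]; exact hw2⟩
    have hlt : ∑ x, f x < ∑ x, f' x := by
      apply Finset.sum_lt_sum
      · intro i _
        rcases eq_or_ne i a with rfl | h
        · rw [hfaa]; omega
        · rw [hfx i h]
      · exact ⟨a, Finset.mem_univ a, by rw [hfaa]; omega⟩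
    calc gammaDR G ≤ ∑ x, f x := Nat.sInf_le ⟨f, hfd, rfl⟩
      _ < ∑ x, f' x := hlt
      _ = gammaDR G' := hsum'
  · -- Case 2 : f' v ≤ 1, so f' b, f' c ≥ 2; reassign around v
    push_neg at hv2
    have hleaf2 : ∀ w, G.Adj v w → w ≠ u → 2 ≤ f' w := by
      intro w hw hwne
      rcases Nat.lt_or_ge (f' w) 2 with h | h
      · have hfw01 : f' w = 0 ∨ f' w = 1 := by omega
        rcases hfw01 with hfw | hfw
        · rcases h0 w hfw with ⟨x, hx, hx3⟩ | ⟨w₁, w₂, hw₁, hw₂, hne, _, _⟩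
          · have := honly' w hw hwne x hx; subst this; omega
          · have e1 := honly' w hw hwne w₁ hw₁
            have e2 := honly' w hw hwne w₂ hw₂
            exact absurd (e1.trans e2.symm) hne
        · obtain ⟨x, hx, hx2⟩ := h1 w hfw
          have := honly' w hw hwne x hx; subst this; omega
      · exact h
    have hfb : 2 ≤ f' b := hleaf2 b hb hbu
    have hfc : 2 ≤ f' c := hleaf2 c hc hcu
    set f : V → ℕ := fun x => if x = v then 3 else if x = a ∨ x = b ∨ x = c then 0 else f' x
      with hfdef
    have hfv : f v = 3 := by simp [hfdef]
    have hfa0 : f a = 0 := by simp [hfdef, hav]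
    have hfb0 : f b = 0 := by simp [hfdef, hbv, hab.symm]
    have hfc0 : f c = 0 := by simp [hfdef, hcv, hac.symm, hbc.symm]
    have hfo : ∀ x, x ≠ v → x ≠ a → x ≠ b → x ≠ c → f x = f' x := by
      intro x h1' h2' h3' h4'; simp [hfdef, h1', h2', h3', h4']
    -- witnesses of other vertices are untouched
    have hwit : ∀ x, x ≠ v → ∀ w, G'.Adj x w → 2 ≤ f' w → f w = f' w := by
      intro x hxv w hw h2
      have hwv : w ≠ v := by rintro rfl; omega
      have hwa : w ≠ a := fun hh => haIso x (hh ▸ hw).symm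
      have hwb : w ≠ b := fun hh => hxv (honly' b hb hbu x (hh ▸ hw).symm)
      have hwc : w ≠ c := fun hh => hxv (honly' c hc hcu x (hh ▸ hw).symm)
      exact hfo w hwv hwa hwb hwc
    have hfd : IsDRDF G f := by
      refine ⟨fun x => ?_, fun x hx => ?_, fun x hx => ?_⟩
      · rcases eq_or_ne x v with rfl | h1'
        · rw [hfv]
        · rcases eq_or_ne x a with rfl | h2'
          · rw [hfa0]; omega
          · rcases eq_or_ne x b with rfl | h3'
            · rw [hfb0]; omega
            · rcases eq_or_ne x c with rfl | h4'
              · rw [hfc0]; omega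
              · rw [hfo x h1' h2' h3' h4']; exact hle3 x
      · rcases eq_or_ne x v with rfl | h1'
        · rw [hfv] at hx; omega
        · rcases eq_or_ne x a with rfl | h2'
          · exact Or.inl ⟨v, ha.symm, hfv⟩
          · rcases eq_or_ne x b with rfl | h3'
            · exact Or.inl ⟨v, hb.symm, hfv⟩
            · rcases eq_or_ne x c with rfl | h4'
              · exact Or.inl ⟨v, hc.symm, hfv⟩
              · rw [hfo x h1' h2' h3' h4'] at hx
                rcases h0 x hx with ⟨w, hw, hw3⟩ | ⟨w₁, w₂, hw₁, hw₂, hne, hv1, hv2'⟩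
                · exact Or.inl ⟨w, hsub _ _ hw, by
                    rw [hwit x h1' w hw (by omega)]; exact hw3⟩
                · exact Or.inr ⟨w₁, w₂, hsub _ _ hw₁, hsub _ _ hw₂, hne,
                    by rw [hwit x h1' w₁ hw₁ (by omega)]; exact hv1,
                    by rw [hwit x h1' w₂ hw₂ (by omega)]; exact hv2'⟩
      · rcases eq_or_ne x v with rfl | h1'
        · rw [hfv] at hx; omega
        · rcases eq_or_ne x a with rfl | h2'
          · rw [hfa0] at hx; omega
          · rcases eq_or_ne x b with rfl | h3'
            · rw [hfb0] at hx; omega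
            · rcases eq_or_ne x c with rfl | h4'
              · rw [hfc0] at hx; omega
              · rw [hfo x h1' h2' h3' h4'] at hx
                obtain ⟨w, hw, hw2⟩ := h1 x hx
                exact ⟨w, hsub _ _ hw, by rw [hwit x h1' w hw hw2]; exact hw2⟩
    -- sum comparison
    have hdecomp : ∀ g : V → ℕ, ∑ x, g x =
        g v + g a + g b + g c +
          ∑ x ∈ (((Finset.univ.erase v).erase a).erase b).erase c, g x := by
      intro g
      have hvmem : v ∈ (Finset.univ : Finset V) := Finset.mem_univ v
      have hamem : a ∈ Finset.univ.erase v := Finset.mem_erase.2 ⟨hav, Finset.mem_univ a⟩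
      have hbmem : b ∈ (Finset.univ.erase v).erase a :=
        Finset.mem_erase.2 ⟨hab.symm, Finset.mem_erase.2 ⟨hbv, Finset.mem_univ b⟩⟩
      have hcmem : c ∈ ((Finset.univ.erase v).erase a).erase b :=
        Finset.mem_erase.2 ⟨hbc.symm, Finset.mem_erase.2 ⟨hac.symm,
          Finset.mem_erase.2 ⟨hcv, Finset.mem_univ c⟩⟩⟩
      rw [← Finset.sum_erase_add _ g hvmem, ← Finset.sum_erase_add _ g hamem,
        ← Finset.sum_erase_add _ g hbmem, ← Finset.sum_erase_add _ g hcmem]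
      ring
    have hrest : ∑ x ∈ (((Finset.univ.erase v).erase a).erase b).erase c, f x =
        ∑ x ∈ (((Finset.univ.erase v).erase a).erase b).erase c, f' x := by
      apply Finset.sum_congr rfl
      intro x hx
      simp only [Finset.mem_erase] at hx
      exact hfo x hx.2.2.2.1 hx.2.2.1 hx.2.1 hx.1
    have e1 := hdecomp f
    have e2 := hdecomp f'
    rw [hfv, hfa0, hfb0, hfc0, hrest] at e1
    have hlt : ∑ x, f x < ∑ x, f' x := by omega
    calc gammaDR G ≤ ∑ x, f x := Nat.sInf_le ⟨f, hfd, rfl⟩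
      _ < ∑ x, f' x := hlt
      _ = gammaDR G' := hsum'

/-- If `G` has a vertex `v` of degree at least `4` all of whose neighbors
except exactly one are leaves (the remaining neighbor having degree at least
`2`), then `b_dR(G) = 1`. -/
theorem bDR_eq_one_of_support {V : Type*} [Fintype V]
    (G : SimpleGraph V) [DecidableRel G.Adj] (v u : V)
    (hdeg : 4 ≤ G.degree v) (hu : G.Adj v u) (hu2 : 2 ≤ G.degree u)
    (hleaf : ∀ w, G.Adj v w → w ≠ u → G.degree w = 1) :
    bDR G = 1 := by
  classical
  have humem : u ∈ G.neighborFinset v := (SimpleGraph.mem_neighborFinset G v u).2 hu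
  have hcard : 2 < ((G.neighborFinset v).erase u).card := by
    rw [Finset.card_erase_of_mem humem, G.card_neighborFinset_eq_degree]
    omega
  obtain ⟨a, b, c, hams, hbms, hcms, hab, hac, hbc⟩ := Finset.two_lt_card_iff.1 hcard
  obtain ⟨hau, hams'⟩ := Finset.mem_erase.1 hams
  obtain ⟨hbu, hbms'⟩ := Finset.mem_erase.1 hbms
  obtain ⟨hcu, hcms'⟩ := Finset.mem_erase.1 hcms
  have ha : G.Adj v a := (SimpleGraph.mem_neighborFinset G v a).1 hams'
  have hb : G.Adj v b := (SimpleGraph.mem_neighborFinset G v b).1 hbms'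
  have hc : G.Adj v c := (SimpleGraph.mem_neighborFinset G v c).1 hcms'
  have hkey := key_lt G v u a b c hu ha hb hc hau hbu hcu hab hac hbc hleaf
  set T := {k | ∃ B : Finset (Sym2 V), ↑B ⊆ G.edgeSet ∧ B.card = k ∧
    gammaDR G < gammaDR (G.deleteEdges ↑B)} with hT
  have h1mem : 1 ∈ T := by
    refine ⟨{s(v,a)}, ?_, Finset.card_singleton _, ?_⟩
    · rw [Finset.coe_singleton, Set.singleton_subset_iff]
      exact (SimpleGraph.mem_edgeSet G).2 ha
    · rw [Finset.coe_singleton]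
      exact hkey
  have hTne : T.Nonempty := ⟨1, h1mem⟩
  have hle : sInf T ≤ 1 := Nat.sInf_le h1mem
  have hne0 : sInf T ≠ 0 := by
    intro h0
    have : (0 : ℕ) ∈ T := h0 ▸ Nat.sInf_mem hTne
    obtain ⟨B, hBsub, hBcard, hBlt⟩ := this
    rw [Finset.card_eq_zero] at hBcard
    subst hBcard
    rw [Finset.coe_empty, SimpleGraph.deleteEdges_empty] at hBlt
    exact lt_irrefl _ hBlt
  have : bDR G = sInf T := rfl
  omega
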